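/- Let N and s be integers with 0 ≤ s < N - 2 and set n = N - s, and suppose n is even with n ≥ 4. Let α_0 < α_1 < ... < α_n be integers with 0 ≤ α_0 and α_n ≤ N, and define the nodes y_k = -cos(α_k π / N). Let g be twice continuously differentiable on [-1, 1], and let r be Berrut's rational interpolant of the values g(y_0),...,g(y_n) at the nodes y_0,...,y_n. Then for every z ∈ [y_0, y_n] with z ≠ y_i for all i, |r(z) - g(z)| ≤ 2(1 + R)·sin((s+1)π/(2N))·(max_{t∈[-1,1]} |g''(t)| + max_{t∈[-1,1]} |g'(t)|), where R = (s+1)(s+3)π²/4. -/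

import Mathlib

lemma neg_one_pow_eq {a b m : ℕ} (h : a + b = 2*m) : (-1:ℝ)^a = (-1)^b := by
  have hb : ((-1:ℝ)^b) ≠ 0 := pow_ne_zero _ (by norm_num)
  have h1 : ((-1:ℝ)^a) * (-1)^b = 1 := by rw [← pow_add, h, pow_mul]; norm_num
  have h2 : ((-1:ℝ)^b) * (-1)^b = 1 := by rw [← pow_add, ← two_mul, pow_mul]; norm_num
  exact mul_right_cancel₀ hb (h1.trans h2.symm)

lemma sum_range_split (f : ℕ → ℝ) (a b : ℕ) :
    ∑ i ∈ Finset.range (a+b), f i = ∑ i ∈ Finset.range a, f i + ∑ i ∈ Finset.range b, f (a+i) := by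
  induction b with
  | zero => simp
  | succ b ih =>
    rw [show a + (b+1) = (a+b)+1 by ring, Finset.sum_range_succ, ih, Finset.sum_range_succ]
    ring

lemma den_aux {d h R : ℝ} (hd : 0 < d) (hh : 0 < h) (hR : 0 ≤ R) (hdR : d ≤ R * h) :
    1/((1+R)*d) ≤ 1/d - 1/(d+h) := by
  have hdh : (0:ℝ) < d + h := by linarith
  have heq : 1/d - 1/(d+h) = h/(d*(d+h)) := by field_simp; ring
  rw [heq, div_le_div_iff₀ (by positivity) (by positivity)]
  nlinarith
open Finset Real

lemma alt_bounds : ∀ (m : ℕ) (c : ℕ → ℝ), (∀ i, i < m → c (i+1) ≤ c i) → (∀ i, i ≤ m → 0 ≤ c i) →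
    0 ≤ ∑ i ∈ Finset.range (m+1), (-1:ℝ)^i * c i ∧ ∑ i ∈ Finset.range (m+1), (-1:ℝ)^i * c i ≤ c 0 := by
  intro m
  induction m with
  | zero => intro c _ h0; simpa using h0 0 le_rfl
  | succ m ih =>
    intro c hmono h0
    have key : ∑ i ∈ Finset.range (m+2), (-1:ℝ)^i * c i
        = c 0 - ∑ i ∈ Finset.range (m+1), (-1:ℝ)^i * c (i+1) := by
      rw [Finset.sum_range_succ' (fun i => (-1:ℝ)^i * c i) (m+1)]
      have h : ∀ i ∈ Finset.range (m+1), (-1:ℝ)^(i+1) * c (i+1) = -((-1:ℝ)^i * c (i+1)) := by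
        intro i _; ring
      rw [Finset.sum_congr rfl h, Finset.sum_neg_distrib]
      ring
    obtain ⟨h1, h2⟩ := ih (fun i => c (i+1)) (fun i hi => hmono (i+1) (by omega))
      (fun i hi => h0 (i+1) (by omega))
    have hc01 : c 1 ≤ c 0 := hmono 0 (by omega)
    have hc0 : 0 ≤ c 0 := h0 0 (by omega)
    constructor
    · rw [key]; linarith
    · rw [key]; linarith

lemma alt_ge (m : ℕ) (c : ℕ → ℝ) (hmono : ∀ i, i < m+1 → c (i+1) ≤ c i)
    (h0 : ∀ i, i ≤ m+1 → 0 ≤ c i) :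
    c 0 - c 1 ≤ ∑ i ∈ Finset.range (m+2), (-1:ℝ)^i * c i := by
  have key : ∑ i ∈ Finset.range (m+2), (-1:ℝ)^i * c i
      = c 0 - ∑ i ∈ Finset.range (m+1), (-1:ℝ)^i * c (i+1) := by
    rw [Finset.sum_range_succ' (fun i => (-1:ℝ)^i * c i) (m+1)]
    have h : ∀ i ∈ Finset.range (m+1), (-1:ℝ)^(i+1) * c (i+1) = -((-1:ℝ)^i * c (i+1)) := by
      intro i _; ring
    rw [Finset.sum_congr rfl h, Finset.sum_neg_distrib]
    ring
  obtain ⟨h1, h2⟩ := alt_bounds m (fun i => c (i+1)) (fun i hi => hmono (i+1) (by omega))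
    (fun i hi => h0 (i+1) (by omega))
  rw [key]; linarith

lemma sum_range_two_mul (m : ℕ) (f : ℕ → ℝ) :
    ∑ i ∈ Finset.range (2*m), f i = ∑ t ∈ Finset.range m, (f (2*t) + f (2*t+1)) := by
  induction m with
  | zero => simp
  | succ m ih =>
    rw [show 2*(m+1) = (2*m+1)+1 by ring, Finset.sum_range_succ, Finset.sum_range_succ, ih,
      Finset.sum_range_succ]
    ring

lemma slope_mvt {f f' : ℝ → ℝ}
    (hf : ∀ t ∈ Set.Icc (-1:ℝ) 1, HasDerivWithinAt f (f' t) (Set.Icc (-1:ℝ) 1) t)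
    {a b : ℝ} (ha : a ∈ Set.Icc (-1:ℝ) 1) (hb : b ∈ Set.Icc (-1:ℝ) 1) (hab : a < b) :
    ∃ ξ ∈ Set.Ioo a b, f' ξ = (f b - f a) / (b - a) := by
  apply exists_hasDerivAt_eq_slope f f' hab
  · have hcont : ContinuousOn f (Set.Icc (-1:ℝ) 1) := fun t ht => (hf t ht).continuousWithinAt
    exact hcont.mono (Set.Icc_subset_Icc ha.1 hb.2)
  · intro x hx
    have h1 : (-1:ℝ) < x := lt_of_le_of_lt ha.1 hx.1
    have h2 : x < 1 := lt_of_lt_of_le hx.2 hb.2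
    exact (hf x ⟨le_of_lt h1, le_of_lt h2⟩).hasDerivAt (Icc_mem_nhds h1 h2)

lemma slope_bound {f f' : ℝ → ℝ}
    (hf : ∀ t ∈ Set.Icc (-1:ℝ) 1, HasDerivWithinAt f (f' t) (Set.Icc (-1:ℝ) 1) t)
    {M : ℝ} (hM : ∀ t ∈ Set.Icc (-1:ℝ) 1, |f' t| ≤ M)
    {a b : ℝ} (ha : a ∈ Set.Icc (-1:ℝ) 1) (hb : b ∈ Set.Icc (-1:ℝ) 1) (hab : a < b) :
    |(f b - f a) / (b - a)| ≤ M := by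
  obtain ⟨ξ, hξ, hξeq⟩ := slope_mvt hf ha hb hab
  rw [← hξeq]
  exact hM ξ ⟨le_trans ha.1 (le_of_lt hξ.1), le_trans (le_of_lt hξ.2) hb.2⟩

lemma second_diff_bound {f f' f'' : ℝ → ℝ}
    (hf : ∀ t ∈ Set.Icc (-1:ℝ) 1, HasDerivWithinAt f (f' t) (Set.Icc (-1:ℝ) 1) t)
    (hf' : ∀ t ∈ Set.Icc (-1:ℝ) 1, HasDerivWithinAt f' (f'' t) (Set.Icc (-1:ℝ) 1) t)
    {M : ℝ} (hM : ∀ t ∈ Set.Icc (-1:ℝ) 1, |f'' t| ≤ M)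
    {a b c : ℝ} (ha : a ∈ Set.Icc (-1:ℝ) 1) (hc : c ∈ Set.Icc (-1:ℝ) 1)
    (hab : a < b) (hbc : b < c) :
    |((f c - f b)/(c - b) - (f b - f a)/(b - a)) / (c - a)| ≤ M := by
  have hb' : b ∈ Set.Icc (-1:ℝ) 1 := ⟨le_trans ha.1 (le_of_lt hab), le_trans (le_of_lt hbc) hc.2⟩
  obtain ⟨ξ₁, hξ₁, hξ₁eq⟩ := slope_mvt hf ha hb' hab
  obtain ⟨ξ₂, hξ₂, hξ₂eq⟩ := slope_mvt hf hb' hc hbc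
  have hξ₁m : ξ₁ ∈ Set.Icc (-1:ℝ) 1 := ⟨le_trans ha.1 (le_of_lt hξ₁.1), le_trans (le_of_lt hξ₁.2) hb'.2⟩
  have hξ₂m : ξ₂ ∈ Set.Icc (-1:ℝ) 1 := ⟨le_trans hb'.1 (le_of_lt hξ₂.1), le_trans (le_of_lt hξ₂.2) hc.2⟩
  have h12 : ξ₁ < ξ₂ := lt_trans hξ₁.2 hξ₂.1
  obtain ⟨η, hη, hηeq⟩ := slope_mvt hf' hξ₁m hξ₂m h12
  have hηm : η ∈ Set.Icc (-1:ℝ) 1 := ⟨le_trans hξ₁m.1 (le_of_lt hη.1), le_trans (le_of_lt hη.2) hξ₂m.2⟩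
  have hdiff : f' ξ₂ - f' ξ₁ = f'' η * (ξ₂ - ξ₁) := by
    have h0 : (0:ℝ) < ξ₂ - ξ₁ := by linarith
    field_simp at hηeq
    linarith [hηeq]
  rw [← hξ₁eq, ← hξ₂eq, hdiff]
  rw [abs_div, abs_mul]
  have hca : 0 < c - a := by linarith
  have hgap : |ξ₂ - ξ₁| ≤ |c - a| := by
    rw [abs_of_pos (by linarith : (0:ℝ) < ξ₂ - ξ₁), abs_of_pos hca]
    have := hξ₁.1; have := hξ₂.2; linarith
  have hMnn : 0 ≤ M := le_trans (abs_nonneg _) (hM η hηm)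
  have habs : (0:ℝ) < |c - a| := abs_pos.mpr (ne_of_gt hca)
  calc |f'' η| * |ξ₂ - ξ₁| / |c - a| ≤ M * |c - a| / |c - a| :=
        div_le_div_of_nonneg_right (mul_le_mul (hM η hηm) hgap (abs_nonneg _) hMnn) habs.le
    _ = M := by field_simp

lemma pair_bound {f f' f'' : ℝ → ℝ}
    (hf : ∀ t ∈ Set.Icc (-1:ℝ) 1, HasDerivWithinAt f (f' t) (Set.Icc (-1:ℝ) 1) t)
    (hf' : ∀ t ∈ Set.Icc (-1:ℝ) 1, HasDerivWithinAt f' (f'' t) (Set.Icc (-1:ℝ) 1) t)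
    {M : ℝ} (hM : ∀ t ∈ Set.Icc (-1:ℝ) 1, |f'' t| ≤ M)
    {u v z : ℝ} (hu : u ∈ Set.Icc (-1:ℝ) 1) (hv : v ∈ Set.Icc (-1:ℝ) 1)
    (hz : z ∈ Set.Icc (-1:ℝ) 1) (huv : u < v) (hzu : z ≠ u) (hzv : z ≠ v) :
    |(f u - f z)/(z - u) - (f v - f z)/(z - v)| ≤ M * (v - u) := by
  have hvu : (0:ℝ) < v - u := by linarith
  rcases lt_or_gt_of_ne hzu with h1 | h1
  · -- z < u < v
    have hΔ := second_diff_bound hf hf' hM hz hv h1 huv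
    have hzu' : z - u ≠ 0 := by intro h; apply hzu; linarith
    have hzv' : z - v ≠ 0 := by intro h; apply hzv; linarith
    have huv' : v - u ≠ 0 := ne_of_gt hvu
    have huz' : u - z ≠ 0 := fun h => hzu' (by linarith [sub_eq_zero.mp h])
    have hvz' : v - z ≠ 0 := fun h => hzv' (by linarith [sub_eq_zero.mp h])
    have hid : (f u - f z)/(z - u) - (f v - f z)/(z - v)
        = (v - u) * (((f v - f u)/(v - u) - (f u - f z)/(u - z)) / (v - z)) := by
      field_simp
      ring
    rw [hid, abs_mul, abs_of_pos hvu, mul_comm M (v-u)]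
    exact mul_le_mul_of_nonneg_left hΔ (le_of_lt hvu)
  · rcases lt_or_gt_of_ne hzv with h2 | h2
    · -- u < z < v
      have hΔ := second_diff_bound hf hf' hM hu hv h1 h2
      have hzu' : z - u ≠ 0 := by intro h; apply hzu; linarith
      have hzv' : z - v ≠ 0 := by intro h; apply hzv; linarith
      have huv' : v - u ≠ 0 := ne_of_gt hvu
      have hvz' : v - z ≠ 0 := fun h => hzv' (by linarith [sub_eq_zero.mp h])
      have hid : (f u - f z)/(z - u) - (f v - f z)/(z - v)
          = (v - u) * (((f v - f z)/(v - z) - (f z - f u)/(z - u)) / (v - u)) := by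
        field_simp
        ring
      rw [hid, abs_mul, abs_of_pos hvu, mul_comm M (v-u)]
      exact mul_le_mul_of_nonneg_left hΔ (le_of_lt hvu)
    · -- u < v < z
      have hΔ := second_diff_bound hf hf' hM hu hz huv h2
      have hzu' : z - u ≠ 0 := by intro h; apply hzu; linarith
      have hzv' : z - v ≠ 0 := by intro h; apply hzv; linarith
      have huv' : v - u ≠ 0 := ne_of_gt hvu
      have hid : (f u - f z)/(z - u) - (f v - f z)/(z - v)
          = (v - u) * (((f z - f v)/(z - v) - (f v - f u)/(v - u)) / (z - u)) := by
        field_simp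
        ring
      rw [hid, abs_mul, abs_of_pos hvu, mul_comm M (v-u)]
      exact mul_le_mul_of_nonneg_left hΔ (le_of_lt hvu)

lemma sin_ratio_gap (N s a b : ℕ) (hN : 0 < N) (ha : a ≤ s+1) (hb1 : 1 ≤ b)
    (hb : b ≤ s+1) (hsN : s+1 ≤ N) :
    Real.sin (a * (π/(2*N))) ≤ (s+1) * (π/2) * Real.sin (b * (π/(2*N))) := by
  have hπ := Real.pi_pos
  have hN' : (0:ℝ) < N := by exact_mod_cast hN
  have hx : (0:ℝ) < π/(2*N) := by positivity
  set x := π/(2*N) with hxdef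
  have hNx : (N:ℝ) * x = π/2 := by rw [hxdef]; field_simp
  have hbN : (b:ℝ) ≤ N := by exact_mod_cast le_trans hb hsN
  have hbx : (b:ℝ)*x ≤ π/2 := by nlinarith
  have h1 : Real.sin ((a:ℝ)*x) ≤ (a:ℝ)*x := Real.sin_le (by positivity)
  have h2 : 2/π * ((b:ℝ)*x) ≤ Real.sin ((b:ℝ)*x) := Real.mul_le_sin (by positivity) hbx
  have has : (a:ℝ) ≤ (s:ℝ)+1 := by exact_mod_cast ha
  have hbs : (1:ℝ) ≤ (b:ℝ) := by exact_mod_cast hb1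
  have key : (a:ℝ)*x ≤ ((s:ℝ)+1) * (π/2) * (2/π * ((b:ℝ)*x)) := by
    have heq2 : ((s:ℝ)+1) * (π/2) * (2/π * ((b:ℝ)*x)) = ((s:ℝ)+1) * ((b:ℝ)*x) := by
      field_simp
    rw [heq2]
    nlinarith [mul_le_mul_of_nonneg_right has hx.le,
      mul_le_mul_of_nonneg_left (mul_le_mul_of_nonneg_right hbs hx.le)
        (by positivity : (0:ℝ) ≤ (s:ℝ)+1)]
  calc Real.sin ((a:ℝ)*x) ≤ (a:ℝ)*x := h1
    _ ≤ ((s:ℝ)+1) * (π/2) * (2/π * ((b:ℝ)*x)) := key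
    _ ≤ ((s:ℝ)+1) * (π/2) * Real.sin ((b:ℝ)*x) := by
        apply mul_le_mul_of_nonneg_left h2 (by positivity)

lemma sin_ratio_sigma (N s σ τ : ℕ) (hN : 0 < N) (hσ1 : 1 ≤ σ) (hσ2 : σ + 1 ≤ 2*N)
    (hτ1 : 1 ≤ τ) (hτ2 : τ + 1 ≤ 2*N)
    (hmin : min σ (2*N - σ) ≤ min τ (2*N - τ) + (s+2)) :
    Real.sin (σ * (π/(2*N))) ≤ (s+3) * (π/2) * Real.sin (τ * (π/(2*N))) := by
  have hπ := Real.pi_pos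
  have hN' : (0:ℝ) < N := by exact_mod_cast hN
  have hx : (0:ℝ) < π/(2*N) := by positivity
  set x := π/(2*N) with hxdef
  have h2Nx : (2*(N:ℝ)) * x = π := by rw [hxdef]; field_simp
  set σ' : ℕ := min σ (2*N - σ) with hσ'def
  set τ' : ℕ := min τ (2*N - τ) with hτ'def
  have hσeq : Real.sin ((σ:ℝ)*x) = Real.sin ((σ':ℝ)*x) := by
    rcases min_cases σ (2*N - σ) with ⟨h, _⟩ | ⟨h, _⟩
    · rw [hσ'def, h]
    · rw [hσ'def, h]
      have hcast : ((2*N - σ : ℕ):ℝ) = 2*(N:ℝ) - σ := by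
        have : σ ≤ 2*N := by omega
        push_cast [this]; ring
      rw [hcast, sub_mul, h2Nx, Real.sin_pi_sub]
  have hτeq : Real.sin ((τ:ℝ)*x) = Real.sin ((τ':ℝ)*x) := by
    rcases min_cases τ (2*N - τ) with ⟨h, _⟩ | ⟨h, _⟩
    · rw [hτ'def, h]
    · rw [hτ'def, h]
      have hcast : ((2*N - τ : ℕ):ℝ) = 2*(N:ℝ) - τ := by
        have : τ ≤ 2*N := by omega
        push_cast [this]; ring
      rw [hcast, sub_mul, h2Nx, Real.sin_pi_sub]
  have hσ'1 : 1 ≤ σ' := by omega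
  have hτ'1 : 1 ≤ τ' := by omega
  have hτ'N : τ' ≤ N := by omega
  have hτ'x : (τ':ℝ)*x ≤ π/2 := by
    have h1 : (τ':ℝ) ≤ N := by exact_mod_cast hτ'N
    nlinarith
  have h1 : Real.sin ((σ':ℝ)*x) ≤ (σ':ℝ)*x := Real.sin_le (by positivity)
  have h2 : 2/π * ((τ':ℝ)*x) ≤ Real.sin ((τ':ℝ)*x) := Real.mul_le_sin (by positivity) hτ'x
  have hστ : (σ':ℝ) ≤ (τ':ℝ) + (s:ℝ) + 2 := by
    have : (σ' : ℕ) ≤ τ' + (s+2) := hmin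
    exact_mod_cast this
  have hτ'1' : (1:ℝ) ≤ (τ':ℝ) := by exact_mod_cast hτ'1
  have key : (σ':ℝ)*x ≤ ((s:ℝ)+3) * (π/2) * (2/π * ((τ':ℝ)*x)) := by
    have heq : ((s:ℝ)+3) * (π/2) * (2/π * ((τ':ℝ)*x)) = ((s:ℝ)+3) * ((τ':ℝ)*x) := by
      field_simp
    rw [heq]
    nlinarith [mul_le_mul_of_nonneg_right hστ hx.le,
      mul_le_mul_of_nonneg_right
        (show ((τ':ℝ)+(s:ℝ)+2) ≤ ((s:ℝ)+3)*(τ':ℝ) by nlinarith) hx.le]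
  rw [hσeq, hτeq]
  calc Real.sin ((σ':ℝ)*x) ≤ (σ':ℝ)*x := h1
    _ ≤ ((s:ℝ)+3) * (π/2) * (2/π * ((τ':ℝ)*x)) := key
    _ ≤ ((s:ℝ)+3) * (π/2) * Real.sin ((τ':ℝ)*x) := by
        apply mul_le_mul_of_nonneg_left h2 (by positivity)

set_option maxHeartbeats 1000000 in
/-- BACC error bound (even case): with `N+1` worker nodes and `s` stragglers,
`s < N - 2`, `n = N - s` even, the Berrut interpolation error at a subset of the
Chebyshev points of the second kind is at most
`2(1+R) sin((s+1)pi/(2N)) (max |g''| + max |g'|)` with `R = (s+1)(s+3)pi^2/4`. -/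
theorem bacc_error_bound_even
    (N s : ℕ) (hs : s + 2 < N) (n : ℕ) (hn : n = N - s)
    (heven : Even n) (hn4 : 4 ≤ n)
    (α : ℕ → ℕ) (hα : ∀ k, k < n → α k < α (k + 1)) (hαN : α n ≤ N)
    (y : ℕ → ℝ) (hy : ∀ k, y k = -Real.cos (α k * Real.pi / N))
    (g g' g'' : ℝ → ℝ)
    (hg' : ∀ t ∈ Set.Icc (-1 : ℝ) 1, HasDerivWithinAt g (g' t) (Set.Icc (-1 : ℝ) 1) t)
    (hg'' : ∀ t ∈ Set.Icc (-1 : ℝ) 1, HasDerivWithinAt g' (g'' t) (Set.Icc (-1 : ℝ) 1) t)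
    (hcont : ContinuousOn g'' (Set.Icc (-1 : ℝ) 1))
    (M₁ M₂ : ℝ)
    (hM₁mem : M₁ ∈ (fun t => |g' t|) '' Set.Icc (-1 : ℝ) 1)
    (hM₁ub : ∀ t ∈ Set.Icc (-1 : ℝ) 1, |g' t| ≤ M₁)
    (hM₂mem : M₂ ∈ (fun t => |g'' t|) '' Set.Icc (-1 : ℝ) 1)
    (hM₂ub : ∀ t ∈ Set.Icc (-1 : ℝ) 1, |g'' t| ≤ M₂) :
    ∀ z ∈ Set.Icc (y 0) (y n), (∀ i ≤ n, z ≠ y i) →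
      |(∑ i ∈ Finset.range (n + 1), ((-1 : ℝ) ^ i / (z - y i)) * g (y i)) /
          (∑ j ∈ Finset.range (n + 1), (-1 : ℝ) ^ j / (z - y j)) - g z| ≤
        2 * (1 + (s + 1) * (s + 3) * Real.pi ^ 2 / 4) *
          Real.sin ((s + 1) * Real.pi / (2 * N)) * (M₂ + M₁) := by
  classical
  intro z hz hzne
  have hπ := Real.pi_pos
  have hN0 : 0 < N := by omega
  have hN' : (0:ℝ) < N := by exact_mod_cast hN0
  set x : ℝ := π/(2*N) with hxdef
  have hx : 0 < x := by positivity
  set Rv : ℝ := ((s:ℝ)+1) * ((s:ℝ)+3) * π^2/4 with hRvdef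
  have hRv : 0 ≤ Rv := by rw [hRvdef]; positivity
  have hM₁0 : 0 ≤ M₁ := by obtain ⟨t, _, ht⟩ := hM₁mem; rw [← ht]; exact abs_nonneg _
  have hM₂0 : 0 ≤ M₂ := by obtain ⟨t, _, ht⟩ := hM₂mem; rw [← ht]; exact abs_nonneg _
  -- monotonicity facts for α
  have hαmono : ∀ j, j ≤ n → ∀ i, i < j → α i < α j := by
    intro j
    induction j with
    | zero => intro _ i hi; omega
    | succ j ih =>
      intro hj i hi
      rcases Nat.lt_succ_iff_lt_or_eq.mp hi with h | h
      · exact lt_trans (ih (by omega) i h) (hα j (by omega))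
      · subst h; exact hα i (by omega)
  have hαgrow : ∀ j, j ≤ n → ∀ i, i ≤ j → α i + (j - i) ≤ α j := by
    intro j
    induction j with
    | zero =>
      intro _ i hi
      have hi0 : i = 0 := Nat.le_zero.mp hi
      subst hi0; omega
    | succ j ih =>
      intro hj i hi
      rcases Nat.eq_or_lt_of_le hi with h | h
      · subst h; omega
      · have h1 := ih (by omega) i (by omega)
        have h2 := hα j (by omega)
        omega
  have hαle : ∀ j, j ≤ n → α j ≤ N := by
    intro j hj
    rcases Nat.eq_or_lt_of_le hj with h | h
    · subst h; exact hαN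
    · exact le_trans (le_of_lt (hαmono n le_rfl j h)) hαN
  have hymono : ∀ i j, i < j → j ≤ n → y i < y j := by
    intro i j hij hj
    rw [hy i, hy j]
    have hai : (α i:ℝ) * π / N ∈ Set.Icc 0 π := by
      constructor
      · positivity
      · have h1 : (α i:ℝ) ≤ N := by exact_mod_cast hαle i (by omega)
        rw [div_le_iff₀ hN']
        nlinarith
    have haj : (α j:ℝ) * π / N ∈ Set.Icc 0 π := by
      constructor
      · positivity
      · have h1 : (α j:ℝ) ≤ N := by exact_mod_cast hαle j hj
        rw [div_le_iff₀ hN']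
        nlinarith
    have hαlt : (α i:ℝ) < α j := by exact_mod_cast hαmono j hj i hij
    have hlt : (α i:ℝ) * π / N < (α j:ℝ) * π / N := by gcongr
    have := Real.strictAntiOn_cos hai haj hlt
    linarith
  have hyIcc : ∀ i, y i ∈ Set.Icc (-1:ℝ) 1 := by
    intro i; rw [hy i]
    constructor
    · have := Real.cos_le_one ((α i:ℝ)*π/N); linarith
    · have := Real.neg_one_le_cos ((α i:ℝ)*π/N); linarith
  have hzIcc : z ∈ Set.Icc (-1:ℝ) 1 := ⟨le_trans (hyIcc 0).1 hz.1, le_trans hz.2 (hyIcc n).2⟩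
  have h0z : y 0 < z := lt_of_le_of_ne hz.1 (fun h => hzne 0 (by omega) h.symm)
  have hzn : z < y n := lt_of_le_of_ne hz.2 (hzne n le_rfl)
  -- locate the interval containing z
  obtain ⟨k, hkltn, hyk, hyk1⟩ : ∃ k, k < n ∧ y k < z ∧ z < y (k+1) := by
    have hyk : y (Nat.findGreatest (fun i => y i < z) n) < z :=
      Nat.findGreatest_spec (P := fun i => y i < z) (Nat.zero_le n) h0z
    set k0 := Nat.findGreatest (fun i => y i < z) n with hk0def
    have hkn : k0 ≤ n := Nat.findGreatest_le n
    have hkltn : k0 < n := by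
      rcases Nat.eq_or_lt_of_le hkn with h | h
      · exfalso; rw [h] at hyk; linarith
      · exact h
    refine ⟨k0, hkltn, hyk, ?_⟩
    have hnot : ¬ (y (k0+1) < z) :=
      Nat.findGreatest_is_greatest (P := fun i => y i < z) (Nat.lt_succ_self k0) (by omega)
    rcases lt_or_eq_of_le (not_lt.mp hnot) with h | h
    · exact h
    · exact absurd h (hzne (k0+1) (by omega))
  -- gap formula
  have hgapf : ∀ p, p < n → y (p+1) - y p
      = 2 * Real.sin (((α (p+1) - α p : ℕ):ℝ) * x) * Real.sin (((α (p+1) + α p : ℕ):ℝ) * x) := by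
    intro p hp
    have hle := le_of_lt (hα p hp)
    have h1 : ((α (p+1) - α p : ℕ):ℝ) = (α (p+1):ℝ) - α p := by
      push_cast [hle]; ring
    have h2 : ((α (p+1) + α p : ℕ):ℝ) = (α (p+1):ℝ) + α p := by push_cast; ring
    rw [hy p, hy (p+1), h1, h2]
    have hN0' : (N:ℝ) ≠ 0 := ne_of_gt hN'
    have key : Real.cos ((α p:ℝ)*π/N) - Real.cos ((α (p+1):ℝ)*π/N)
        = 2 * Real.sin (((α (p+1):ℝ) - α p) * x) * Real.sin (((α (p+1):ℝ) + α p) * x) := by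
      rw [Real.cos_sub_cos]
      rw [show ((α p:ℝ)*π/N + (α (p+1):ℝ)*π/N)/2 = ((α (p+1):ℝ) + α p) * x by
        rw [hxdef]; field_simp; ring]
      rw [show ((α p:ℝ)*π/N - (α (p+1):ℝ)*π/N)/2 = -(((α (p+1):ℝ) - α p) * x) by
        rw [hxdef]; field_simp; ring]
      rw [Real.sin_neg]
      ring
    linarith [key]
  have hgappos : ∀ p, p < n → 0 < y (p+1) - y p :=
    fun p hp => sub_pos.mpr (hymono p (p+1) (by omega) (by omega))
  have hgap_le : ∀ p, p < n → α (p+1) - α p ≤ s + 1 := by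
    intro p hp
    have h1 := hαgrow p (by omega) 0 (by omega)
    have h2 := hαgrow n le_rfl (p+1) (by omega)
    omega
  have hgap_ge1 : ∀ p, p < n → 1 ≤ α (p+1) - α p := fun p hp => by have := hα p hp; omega
  have hgaps2 : ∀ p q, p < q → q < n → (α (p+1) - α p) + (α (q+1) - α q) ≤ s + 2 := by
    intro p q hpq hq
    have h0 := hαgrow p (by omega) 0 (by omega)
    have h1 := hαgrow (p+1) (by omega) 0 (by omega)
    have h2 := hαgrow q (by omega) (p+1) (by omega)
    have h3 := hαgrow n le_rfl (q+1) (by omega)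
    have hm1 := hα p (by omega)
    have hm2 := hα q hq
    omega
  have hσ1 : ∀ p, p < n → 1 ≤ α (p+1) + α p := by
    intro p hp; have := hα p hp; omega
  have hσ2 : ∀ p, p < n → α (p+1) + α p + 1 ≤ 2*N := by
    intro p hp
    have h1 : α p < α n := hαmono n le_rfl p hp
    have h2 : α (p+1) ≤ N := hαle (p+1) (by omega)
    omega
  have hsinnn : ∀ w : ℕ, w ≤ 2*N → 0 ≤ Real.sin ((w:ℝ) * x) := by
    intro w hw
    apply Real.sin_nonneg_of_nonneg_of_le_pi (by positivity)
    have hcast : (w:ℝ) ≤ 2*N := by exact_mod_cast hw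
    rw [hxdef]
    calc (w:ℝ) * (π/(2*N)) ≤ (2*N) * (π/(2*N)) := by
          apply mul_le_mul_of_nonneg_right hcast (by positivity)
      _ = π := by field_simp
  -- the gap-ratio bound
  have hratio : ∀ p q, p < n → q < n →
      min (α (p+1) + α p) (2*N - (α (p+1) + α p)) ≤ min (α (q+1) + α q) (2*N - (α (q+1) + α q)) + (s+2) →
      y (p+1) - y p ≤ Rv * (y (q+1) - y q) := by
    intro p q hp hq hmincond
    rw [hgapf p hp, hgapf q hq]
    have h1 := sin_ratio_gap N s (α (p+1) - α p) (α (q+1) - α q) hN0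
      (hgap_le p hp) (hgap_ge1 q hq) (hgap_le q hq) (by omega)
    have h2 := sin_ratio_sigma N s (α (p+1) + α p) (α (q+1) + α q) hN0
      (hσ1 p hp) (hσ2 p hp) (hσ1 q hq) (hσ2 q hq) hmincond
    rw [← hxdef] at h1 h2
    have e1 : 0 ≤ Real.sin ((↑(α (q+1) - α q):ℝ) * x) := hsinnn _ (by have := hgap_le q hq; omega)
    have e2 : 0 ≤ Real.sin ((↑(α (p+1) + α p):ℝ) * x) := hsinnn _ (by have := hσ2 p hp; omega)
    have e3 : 0 ≤ Real.sin ((↑(α (q+1) + α q):ℝ) * x) := hsinnn _ (by have := hσ2 q hq; omega)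
    have hrhs1 : 0 ≤ ((s:ℝ)+1) * (π/2) * Real.sin ((↑(α (q+1) - α q):ℝ) * x) :=
      mul_nonneg (by positivity) e1
    have mul1 : Real.sin ((↑(α (p+1) - α p):ℝ) * x) * Real.sin ((↑(α (p+1) + α p):ℝ) * x)
        ≤ (((s:ℝ)+1) * (π/2) * Real.sin ((↑(α (q+1) - α q):ℝ) * x))
          * (((s:ℝ)+3) * (π/2) * Real.sin ((↑(α (q+1) + α q):ℝ) * x)) :=
      mul_le_mul h1 h2 e2 hrhs1
    rw [hRvdef]
    nlinarith [mul1]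
  -- neighbourhood facts
  have hyik : ∀ i, i ≤ k → y i < z := by
    intro i hi
    rcases Nat.eq_or_lt_of_le hi with h | h
    · rw [h]; exact hyk
    · exact lt_trans (hymono i k h (by omega)) hyk
  have hyik1 : ∀ i, k+1 ≤ i → i ≤ n → z < y i := by
    intro i h1 h2
    rcases Nat.eq_or_lt_of_le h1 with h | h
    · rw [← h]; exact hyk1
    · exact lt_trans hyk1 (hymono (k+1) i h h2)
  have mono1 : ∀ i, i < k → (1:ℝ)/(z - y (k-(i+1))) ≤ 1/(z - y (k-i)) := by
    intro i hi
    apply one_div_le_one_div_of_le (sub_pos.mpr (hyik (k-i) (by omega)))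
    have h := hymono (k-(i+1)) (k-i) (by omega) (by omega)
    linarith
  have nn1 : ∀ i, i ≤ k → (0:ℝ) ≤ 1/(z - y (k-i)) := by
    intro i hi
    have := hyik (k-i) (by omega)
    exact le_of_lt (one_div_pos.mpr (by linarith))
  have mono2 : ∀ i, i < n-k-1 → (1:ℝ)/(y (k+1+(i+1)) - z) ≤ 1/(y (k+1+i) - z) := by
    intro i hi
    apply one_div_le_one_div_of_le (sub_pos.mpr (hyik1 (k+1+i) (by omega) (by omega)))
    have h := hymono (k+1+i) (k+1+(i+1)) (by omega) (by omega)
    linarith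
  have nn2 : ∀ i, i ≤ n-k-1 → (0:ℝ) ≤ 1/(y (k+1+i) - z) := by
    intro i hi
    have := hyik1 (k+1+i) (by omega) (by omega)
    exact le_of_lt (one_div_pos.mpr (by linarith))
  -- denominator decomposition
  have hED : (-1:ℝ)^k * (∑ j ∈ Finset.range (n+1), (-1:ℝ)^j / (z - y j))
      = (∑ i ∈ Finset.range (k+1), (-1:ℝ)^i * (1/(z - y (k-i))))
      + (∑ i ∈ Finset.range (n-k), (-1:ℝ)^i * (1/(y (k+1+i) - z))) := by
    rw [Finset.mul_sum]
    rw [show n+1 = (k+1) + (n-k) by omega]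
    rw [sum_range_split]
    congr 1
    · rw [← Finset.sum_range_reflect (fun j => (-1:ℝ)^k * ((-1:ℝ)^j / (z - y j))) (k+1)]
      apply Finset.sum_congr rfl
      intro i hi
      simp only [Finset.mem_range] at hi
      have hki : k + 1 - 1 - i = k - i := by omega
      rw [hki]
      have hpow : (-1:ℝ)^k * (-1)^(k-i) = (-1)^i := by
        rw [← pow_add]; exact neg_one_pow_eq (m := k) (by omega)
      rw [← hpow]; ring
    · apply Finset.sum_congr rfl
      intro i hi
      simp only [Finset.mem_range] at hi
      have hpow : (-1:ℝ)^k * (-1)^(k+1+i) = -((-1:ℝ)^i) := by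
        rw [← pow_add]
        rw [show (-1:ℝ)^(k+(k+1+i)) = (-1)^(i+1) from neg_one_pow_eq (m := k+1+i) (by omega)]
        rw [pow_succ]; ring
      calc (-1:ℝ)^k * ((-1)^(k+1+i) / (z - y (k+1+i)))
          = ((-1:ℝ)^k * (-1)^(k+1+i)) * (1/(z - y (k+1+i))) := by ring
        _ = (-((-1:ℝ)^i)) * (1/(z - y (k+1+i))) := by rw [hpow]
        _ = (-1:ℝ)^i * (1/(y (k+1+i) - z)) := by
            rw [show z - y (k+1+i) = -(y (k+1+i) - z) by ring, div_neg]; ring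
  have hdmin1 : 0 < z - y k := sub_pos.mpr hyk
  have hdmin2 : 0 < y (k+1) - z := sub_pos.mpr hyk1
  have hdminpos : 0 < min (z - y k) (y (k+1) - z) := lt_min hdmin1 hdmin2
  have h2dgap : 2 * min (z - y k) (y (k+1) - z) ≤ y (k+1) - y k := by
    have h1 := min_le_left (z - y k) (y (k+1) - z)
    have h2 := min_le_right (z - y k) (y (k+1) - z)
    linarith
  -- denominator lower bound
  have hEpos : 1/((1+Rv) * min (z - y k) (y (k+1) - z))
      ≤ (-1:ℝ)^k * (∑ j ∈ Finset.range (n+1), (-1:ℝ)^j / (z - y j)) := by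
    rw [hED]
    have hS1nn : 0 ≤ ∑ i ∈ Finset.range (k+1), (-1:ℝ)^i * (1/(z - y (k-i))) :=
      (alt_bounds k (fun i => 1/(z - y (k-i))) (fun i hi => mono1 i hi) (fun i hi => nn1 i hi)).1
    have hS2nn : 0 ≤ ∑ i ∈ Finset.range (n-k-1+1), (-1:ℝ)^i * (1/(y (k+1+i) - z)) :=
      (alt_bounds (n-k-1) (fun i => 1/(y (k+1+i) - z)) (fun i hi => mono2 i hi) (fun i hi => nn2 i hi)).1
    rw [show n-k-1+1 = n-k by omega] at hS2nn
    rcases le_total (z - y k) (y (k+1) - z) with hcase | hcase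
    · -- nearest node on the left
      rw [min_eq_left hcase] at h2dgap ⊢
      rcases Nat.eq_zero_or_pos k with hk0 | hk0
      · subst hk0
        have hS1val : (∑ i ∈ Finset.range (0+1), (-1:ℝ)^i * (1/(z - y (0-i)))) = 1/(z - y 0) := by
          simp
        rw [hS1val]
        have hfin : 1/((1+Rv)*(z - y 0)) ≤ 1/(z - y 0) := by
          apply one_div_le_one_div_of_le hdmin1
          nlinarith
        linarith
      · have hS1ge : 1/(z - y (k-0)) - 1/(z - y (k-1))
            ≤ ∑ i ∈ Finset.range (k-1+2), (-1:ℝ)^i * (1/(z - y (k-i))) :=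
          alt_ge (k-1) (fun i => 1/(z - y (k-i)))
            (fun i hi => mono1 i (by omega)) (fun i hi => nn1 i (by omega))
        rw [show k-1+2 = k+1 by omega, Nat.sub_zero] at hS1ge
        have hh : 0 < y k - y (k-1) := sub_pos.mpr (hymono (k-1) k (by omega) (by omega))
        have ek : k - 1 + 1 = k := by omega
        have hRk : y (k+1) - y k ≤ Rv * (y (k-1+1) - y (k-1)) := by
          apply hratio k (k-1) hkltn (by omega)
          have e1 := hgaps2 (k-1) k (by omega) hkltn
          rw [ek] at e1 ⊢
          have m1 : α (k-1) < α k := hαmono k (by omega) (k-1) (by omega)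
          have m2 : α k < α (k+1) := hα k hkltn
          have b1 := hσ2 k hkltn
          omega
        rw [ek] at hRk
        have hdR : z - y k ≤ Rv * (y k - y (k-1)) := by linarith
        have hden := den_aux hdmin1 hh hRv hdR
        rw [show (z - y k) + (y k - y (k-1)) = z - y (k-1) by ring] at hden
        linarith
    · -- nearest node on the right
      rw [min_eq_right hcase] at h2dgap ⊢
      rcases Nat.eq_or_lt_of_le (show k+1 ≤ n by omega) with hk1n | hk1n
      · rw [show n - k = 1 by omega]
        have hS2val : (∑ i ∈ Finset.range 1, (-1:ℝ)^i * (1/(y (k+1+i) - z))) = 1/(y (k+1) - z) := by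
          simp
        rw [hS2val]
        have hfin : 1/((1+Rv)*(y (k+1) - z)) ≤ 1/(y (k+1) - z) := by
          apply one_div_le_one_div_of_le hdmin2
          nlinarith
        linarith
      · have hS2ge : 1/(y (k+1+0) - z) - 1/(y (k+1+1) - z)
            ≤ ∑ i ∈ Finset.range (n-k-2+2), (-1:ℝ)^i * (1/(y (k+1+i) - z)) :=
          alt_ge (n-k-2) (fun i => 1/(y (k+1+i) - z))
            (fun i hi => mono2 i (by omega)) (fun i hi => nn2 i (by omega))
        rw [show n-k-2+2 = n-k by omega, Nat.add_zero] at hS2ge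
        have hh : 0 < y (k+1+1) - y (k+1) := sub_pos.mpr (hymono (k+1) (k+1+1) (by omega) (by omega))
        have hRk : y (k+1) - y k ≤ Rv * (y (k+1+1) - y (k+1)) := by
          apply hratio k (k+1) hkltn hk1n
          have e1 := hgaps2 k (k+1) (by omega) hk1n
          have m1 : α k < α (k+1) := hα k hkltn
          have m2 : α (k+1) < α (k+1+1) := hα (k+1) hk1n
          have b1 := hσ2 (k+1) hk1n
          omega
        have hdR : y (k+1) - z ≤ Rv * (y (k+1+1) - y (k+1)) := by linarith
        have hden := den_aux hdmin2 hh hRv hdR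
        rw [show (y (k+1) - z) + (y (k+1+1) - y (k+1)) = y (k+1+1) - z by ring] at hden
        linarith
  -- numerator bound
  obtain ⟨m, hm⟩ := heven
  have h2m : 2*m = n := by omega
  have hpairb : ∀ t, t < m →
      |((-1:ℝ)^(2*t)/(z - y (2*t))) * (g (y (2*t)) - g z)
        + ((-1:ℝ)^(2*t+1)/(z - y (2*t+1))) * (g (y (2*t+1)) - g z)|
      ≤ M₂ * (y (2*t+1) - y (2*t)) := by
    intro t ht
    have h2t : 2*t+1 ≤ n := by omega
    have e1 : (-1:ℝ)^(2*t) = 1 := by rw [pow_mul]; norm_num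
    have e2 : (-1:ℝ)^(2*t+1) = -1 := by rw [pow_succ, e1]; norm_num
    have heq : ((-1:ℝ)^(2*t)/(z - y (2*t))) * (g (y (2*t)) - g z)
        + ((-1:ℝ)^(2*t+1)/(z - y (2*t+1))) * (g (y (2*t+1)) - g z)
        = (g (y (2*t)) - g z)/(z - y (2*t)) - (g (y (2*t+1)) - g z)/(z - y (2*t+1)) := by
      rw [e1, e2]; ring
    rw [heq]
    exact pair_bound hg' hg'' hM₂ub (hyIcc (2*t)) (hyIcc (2*t+1)) hzIcc
      (hymono (2*t) (2*t+1) (by omega) h2t) (hzne (2*t) (by omega)) (hzne (2*t+1) h2t)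
  have hNumsplit : (∑ i ∈ Finset.range (n+1), ((-1:ℝ)^i/(z - y i)) * (g (y i) - g z))
      = (∑ t ∈ Finset.range m, (((-1:ℝ)^(2*t)/(z - y (2*t))) * (g (y (2*t)) - g z)
          + ((-1:ℝ)^(2*t+1)/(z - y (2*t+1))) * (g (y (2*t+1)) - g z)))
        + ((-1:ℝ)^n/(z - y n)) * (g (y n) - g z) := by
    rw [show n+1 = 2*m+1 by omega, Finset.sum_range_succ,
      sum_range_two_mul m (fun i => ((-1:ℝ)^i/(z - y i)) * (g (y i) - g z)), h2m]
  have hlast : |((-1:ℝ)^n/(z - y n)) * (g (y n) - g z)| ≤ M₁ := by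
    have hslope := slope_bound hg' hM₁ub hzIcc (hyIcc n) hzn
    have heq : |((-1:ℝ)^n/(z - y n)) * (g (y n) - g z)| = |(g (y n) - g z)/(y n - z)| := by
      rw [abs_mul, abs_div, abs_div, abs_pow, abs_neg, abs_one, one_pow, abs_sub_comm z (y n)]
      ring
    rw [heq]; exact hslope
  have hsumgap : (∑ t ∈ Finset.range m, (y (2*t+1) - y (2*t))) ≤ 2 := by
    have h1 : (∑ t ∈ Finset.range m, (y (2*t+1) - y (2*t)))
        ≤ ∑ i ∈ Finset.range (2*m), (y (i+1) - y i) := by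
      rw [sum_range_two_mul (m) (fun i => y (i+1) - y i)]
      apply Finset.sum_le_sum
      intro t ht
      simp only [Finset.mem_range] at ht
      show y (2*t+1) - y (2*t) ≤ (y (2*t+1) - y (2*t)) + (y (2*t+1+1) - y (2*t+1))
      have hpos : 0 < y (2*t+1+1) - y (2*t+1) :=
        sub_pos.mpr (hymono (2*t+1) (2*t+1+1) (by omega) (by omega))
      linarith
    have h2 : ∑ i ∈ Finset.range (2*m), (y (i+1) - y i) = y (2*m) - y 0 :=
      Finset.sum_range_sub y (2*m)
    have h3 : y (2*m) - y 0 ≤ 2 := by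
      rw [h2m]
      have := (hyIcc n).2; have := (hyIcc 0).1; linarith
    linarith
  have hNumabs : |∑ i ∈ Finset.range (n+1), ((-1:ℝ)^i/(z - y i)) * (g (y i) - g z)| ≤ 2*M₂ + M₁ := by
    rw [hNumsplit]
    have h1 : |∑ t ∈ Finset.range m, (((-1:ℝ)^(2*t)/(z - y (2*t))) * (g (y (2*t)) - g z)
          + ((-1:ℝ)^(2*t+1)/(z - y (2*t+1))) * (g (y (2*t+1)) - g z))|
        ≤ ∑ t ∈ Finset.range m, M₂ * (y (2*t+1) - y (2*t)) := by
      refine le_trans (Finset.abs_sum_le_sum_abs _ _) (Finset.sum_le_sum ?_)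
      intro t ht
      exact hpairb t (Finset.mem_range.mp ht)
    have h2 : ∑ t ∈ Finset.range m, M₂ * (y (2*t+1) - y (2*t)) ≤ 2*M₂ := by
      rw [← Finset.mul_sum]
      nlinarith [hsumgap, hM₂0]
    calc |_| ≤ |∑ t ∈ Finset.range m, (((-1:ℝ)^(2*t)/(z - y (2*t))) * (g (y (2*t)) - g z)
          + ((-1:ℝ)^(2*t+1)/(z - y (2*t+1))) * (g (y (2*t+1)) - g z))|
            + |((-1:ℝ)^n/(z - y n)) * (g (y n) - g z)| := abs_add_le _ _
      _ ≤ 2*M₂ + M₁ := by linarith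
  -- assemble
  have hsx : ((s:ℝ) + 1) * π / (2 * (N:ℝ)) = ((s:ℝ)+1)*x := by rw [hxdef]; ring
  set D := ∑ j ∈ Finset.range (n+1), (-1:ℝ)^j / (z - y j) with hDdef
  set A := ∑ i ∈ Finset.range (n+1), ((-1:ℝ)^i / (z - y i)) * g (y i) with hAdef
  set Num := ∑ i ∈ Finset.range (n+1), ((-1:ℝ)^i/(z - y i)) * (g (y i) - g z) with hNumdef
  have hq : 0 < (1+Rv) * min (z - y k) (y (k+1) - z) := mul_pos (by linarith) hdminpos
  have hDpos : 0 < (-1:ℝ)^k * D := lt_of_lt_of_le (one_div_pos.mpr hq) hEpos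
  have hDne : D ≠ 0 := by
    intro h0
    rw [h0, mul_zero] at hDpos
    exact lt_irrefl 0 hDpos
  have hDabs : 1/((1+Rv) * min (z - y k) (y (k+1) - z)) ≤ |D| := by
    have habs : |D| = |(-1:ℝ)^k * D| := by
      rw [abs_mul, abs_pow, abs_neg, abs_one, one_pow, one_mul]
    rw [habs, abs_of_pos hDpos]
    exact hEpos
  have hform : A / D - g z = Num / D := by
    have hsub : A - g z * D = Num := by
      rw [hAdef, hDdef, hNumdef, Finset.mul_sum, ← Finset.sum_sub_distrib]
      apply Finset.sum_congr rfl
      intro i _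
      ring
    rw [← hsub]
    field_simp
  rw [hform, abs_div]
  have hstep : |Num| / |D| ≤ (2*M₂ + M₁) * ((1+Rv) * min (z - y k) (y (k+1) - z)) := by
    rw [div_le_iff₀ (abs_pos.mpr hDne)]
    have A1 : (2*M₂+M₁) * ((1+Rv) * min (z - y k) (y (k+1) - z))
          * (1/((1+Rv) * min (z - y k) (y (k+1) - z)))
        ≤ (2*M₂+M₁) * ((1+Rv) * min (z - y k) (y (k+1) - z)) * |D| := by
      apply mul_le_mul_of_nonneg_left hDabs
      exact mul_nonneg (by linarith) (le_of_lt hq)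
    have A2 : (2*M₂+M₁) * ((1+Rv) * min (z - y k) (y (k+1) - z))
          * (1/((1+Rv) * min (z - y k) (y (k+1) - z))) = 2*M₂+M₁ := by
      field_simp
    linarith [hNumabs]
  have hdsin : min (z - y k) (y (k+1) - z) ≤ Real.sin (((s:ℝ)+1)*x) := by
    have hgk : y (k+1) - y k ≤ 2 * Real.sin (((s:ℝ)+1)*x) := by
      rw [hgapf k hkltn]
      have hσle : Real.sin ((↑(α (k+1) + α k):ℝ) * x) ≤ 1 := Real.sin_le_one _
      have hσnn : 0 ≤ Real.sin ((↑(α (k+1) + α k):ℝ) * x) :=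
        hsinnn _ (by have := hσ2 k hkltn; omega)
      have hgnn : 0 ≤ Real.sin ((↑(α (k+1) - α k):ℝ) * x) :=
        hsinnn _ (by have := hgap_le k hkltn; omega)
      have hmem1 : (↑(α (k+1) - α k):ℝ) * x ∈ Set.Icc (-(π/2)) (π/2) := by
        constructor
        · have h0 : (0:ℝ) ≤ (↑(α (k+1) - α k):ℝ) * x := by positivity
          linarith
        · have hle : ((α (k+1) - α k : ℕ):ℝ) ≤ (N:ℝ) := by
            exact_mod_cast le_trans (hgap_le k hkltn) (by omega)
          calc (↑(α (k+1) - α k):ℝ) * x ≤ (N:ℝ)*x := mul_le_mul_of_nonneg_right hle (le_of_lt hx)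
            _ = π/2 := by rw [hxdef]; field_simp
      have hmem2 : ((s:ℝ)+1) * x ∈ Set.Icc (-(π/2)) (π/2) := by
        constructor
        · have h0 : (0:ℝ) ≤ ((s:ℝ)+1)*x := by positivity
          linarith
        · have hle : ((s:ℝ)+1) ≤ (N:ℝ) := by exact_mod_cast (show s+1 ≤ N by omega)
          calc ((s:ℝ)+1) * x ≤ (N:ℝ)*x := mul_le_mul_of_nonneg_right hle (le_of_lt hx)
            _ = π/2 := by rw [hxdef]; field_simp
      have hargle : (↑(α (k+1) - α k):ℝ) * x ≤ ((s:ℝ)+1)*x := by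
        have hc : ((α (k+1) - α k : ℕ):ℝ) ≤ (s:ℝ)+1 := by exact_mod_cast hgap_le k hkltn
        exact mul_le_mul_of_nonneg_right hc (le_of_lt hx)
      have hgle := Real.strictMonoOn_sin.monotoneOn hmem1 hmem2 hargle
      nlinarith [hgle, hσle, hσnn, hgnn]
    linarith
  have hsinnn' : 0 ≤ Real.sin (((s:ℝ)+1)*x) := le_trans (le_of_lt hdminpos) hdsin
  rw [hsx]
  refine le_trans hstep ?_
  have hRs : (0:ℝ) ≤ 1 + ((s:ℝ) + 1) * ((s:ℝ) + 3) * π ^ 2 / 4 := by positivity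
  rw [hRvdef]
  nlinarith [mul_nonneg (mul_nonneg hRs hM₂0) (sub_nonneg.mpr hdsin),
    mul_nonneg (mul_nonneg hRs hM₁0) (sub_nonneg.mpr hdsin),
    mul_nonneg (mul_nonneg hRs hM₁0) hsinnn', hdminpos.le]
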